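/- Let T be a symmetric bilinear form on Minkowski space ℝ⁴ satisfying the dominant energy condition, and suppose T♯X = 0 for some future-directed null vector X (η(X,X) = 0, X ≠ 0, X 0 > 0). Then there exists χ ≥ 0 such that T(u,v) = χ * η(X,u) * η(X,v) for all u, v. -/

import Mathlib

noncomputable def eta (x y : Fin 4 → ℝ) : ℝ :=
  x 0 * y 0 - x 1 * y 1 - x 2 * y 2 - x 3 * y 3

set_option maxHeartbeats 1000000 in
/-- If T satisfies the dominant energy condition and T♯X = 0 for a
future-directed null vector X, then T is null dust along X. -/
theorem nullDust_of_DEC_sharp_eq_zero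
    (T : LinearMap.BilinForm ℝ (Fin 4 → ℝ)) (hT : ∀ x y, T x y = T y x)
    (Tsharp : (Fin 4 → ℝ) → (Fin 4 → ℝ))
    (hTs : ∀ x u, eta (Tsharp x) u = T x u)
    (hDEC : ∀ Z : Fin 4 → ℝ, eta Z Z ≥ 0 → Z 0 ≥ 0 →
        eta (Tsharp Z) (Tsharp Z) ≥ 0 ∧ (Tsharp Z) 0 ≥ 0)
    (X : Fin 4 → ℝ) (hXnull : eta X X = 0) (hXne : X ≠ 0) (hXfut : X 0 > 0)
    (hTX : Tsharp X = 0) :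
    ∃ χ : ℝ, 0 ≤ χ ∧ ∀ u v : Fin 4 → ℝ, T u v = χ * eta X u * eta X v := by
  have hX0ne : X 0 ≠ 0 := ne_of_gt hXfut
  -- T X u = 0 for all u
  have hTXu : ∀ u, T X u = 0 := by
    intro u
    have h := hTs X u
    rw [hTX] at h
    simp [eta] at h
    exact h.symm
  -- key: for causal future Z, T Z · = k Z * eta X · with k Z ≥ 0
  have key : ∀ Z : Fin 4 → ℝ, eta Z Z ≥ 0 → Z 0 ≥ 0 →
      (∀ u, T Z u = ((Tsharp Z) 0 / X 0) * eta X u) ∧ 0 ≤ (Tsharp Z) 0 / X 0 := by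
    intro Z hZc hZ0
    obtain ⟨hWc, hW0⟩ := hDEC Z hZc hZ0
    have hWX : eta (Tsharp Z) X = 0 := by
      have h1 := hTs Z X
      have h2 : T Z X = 0 := by rw [hT Z X]; exact hTXu Z
      rw [h2] at h1; exact h1
    -- Tsharp Z is proportional to X
    have hWeq : Tsharp Z = ((Tsharp Z) 0 / X 0) • X := by
      set W := Tsharp Z with hWdef
      simp only [eta] at hWc hWX hXnull
      have hS : (W 1 * X 0 - W 0 * X 1)^2 + (W 2 * X 0 - W 0 * X 2)^2
          + (W 3 * X 0 - W 0 * X 3)^2 = -(X 0)^2 * (W 0 * W 0 - W 1 * W 1 - W 2 * W 2 - W 3 * W 3) := by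
        linear_combination (2 * W 0 * X 0) * hWX + (-(W 0 * W 0)) * hXnull
      have hSle : (W 1 * X 0 - W 0 * X 1)^2 + (W 2 * X 0 - W 0 * X 2)^2
          + (W 3 * X 0 - W 0 * X 3)^2 ≤ 0 := by nlinarith [sq_nonneg (X 0)]
      have e1 : W 1 * X 0 - W 0 * X 1 = 0 := by
        nlinarith [sq_nonneg (W 1 * X 0 - W 0 * X 1), sq_nonneg (W 2 * X 0 - W 0 * X 2),
          sq_nonneg (W 3 * X 0 - W 0 * X 3)]
      have e2 : W 2 * X 0 - W 0 * X 2 = 0 := by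
        nlinarith [sq_nonneg (W 1 * X 0 - W 0 * X 1), sq_nonneg (W 2 * X 0 - W 0 * X 2),
          sq_nonneg (W 3 * X 0 - W 0 * X 3)]
      have e3 : W 3 * X 0 - W 0 * X 3 = 0 := by
        nlinarith [sq_nonneg (W 1 * X 0 - W 0 * X 1), sq_nonneg (W 2 * X 0 - W 0 * X 2),
          sq_nonneg (W 3 * X 0 - W 0 * X 3)]
      funext i
      fin_cases i <;> simp [Pi.smul_apply, smul_eq_mul] <;> field_simp <;> linarith
    refine ⟨fun u => ?_, div_nonneg hW0 (le_of_lt hXfut)⟩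
    have h := hTs Z u
    rw [hWeq] at h
    rw [← h]
    simp [eta, Pi.smul_apply, smul_eq_mul]
    ring
  -- causal spanning vectors
  have hdec : ∀ u : Fin 4 → ℝ, u = (u 0 - u 1 - u 2 - u 3) • (![1,0,0,0] : Fin 4 → ℝ)
      + u 1 • (![1,1,0,0] : Fin 4 → ℝ) + u 2 • (![1,0,1,0] : Fin 4 → ℝ)
      + u 3 • (![1,0,0,1] : Fin 4 → ℝ) := by
    intro u
    funext i
    fin_cases i <;> simp <;> ring
  obtain ⟨h0, h0n⟩ := key ![1,0,0,0] (by simp [eta]) (by norm_num)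
  obtain ⟨h1, _⟩ := key ![1,1,0,0] (by simp [eta]) (by norm_num)
  obtain ⟨h2, _⟩ := key ![1,0,1,0] (by simp [eta]) (by norm_num)
  obtain ⟨h3, _⟩ := key ![1,0,0,1] (by simp [eta]) (by norm_num)
  set k0 := (Tsharp ![1,0,0,0]) 0 / X 0
  set k1 := (Tsharp ![1,1,0,0]) 0 / X 0
  set k2 := (Tsharp ![1,0,1,0]) 0 / X 0
  set k3 := (Tsharp ![1,0,0,1]) 0 / X 0
  -- general formula for T u v
  have hTuv : ∀ u v : Fin 4 → ℝ, T u v =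
      ((u 0 - u 1 - u 2 - u 3) * k0 + u 1 * k1 + u 2 * k2 + u 3 * k3) * eta X v := by
    intro u v
    conv_lhs => rw [hdec u]
    simp only [map_add, map_smul, LinearMap.add_apply, LinearMap.smul_apply, smul_eq_mul,
      h0, h1, h2, h3]
    ring
  -- define M u
  set M : (Fin 4 → ℝ) → ℝ := fun u => (u 0 - u 1 - u 2 - u 3) * k0 + u 1 * k1 + u 2 * k2 + u 3 * k3
    with hM
  have hTuv' : ∀ u v, T u v = M u * eta X v := hTuv
  -- evaluate at v = e0
  have hMu : ∀ u, M u * X 0 = k0 * eta X u := by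
    intro u
    have hA : T u ![1,0,0,0] = M u * eta X ![1,0,0,0] := hTuv' u _
    have hB : T ![1,0,0,0] u = M ![1,0,0,0] * eta X u := hTuv' _ u
    have hMe0 : M ![1,0,0,0] = k0 := by simp [hM]
    have hetae0 : eta X ![1,0,0,0] = X 0 := by simp [eta]
    rw [hT u ![1,0,0,0], hB, hMe0] at hA
    rw [hetae0] at hA
    linarith [hA]
  refine ⟨k0 / X 0, div_nonneg h0n (le_of_lt hXfut), fun u v => ?_⟩
  have := hMu u
  have hMueq : M u = k0 / X 0 * eta X u := by
    field_simp
    linarith [hMu u]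
  rw [hTuv' u v, hMueq]
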